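/- For every integer m ≥ 1, the m×m integer matrices P'_m and J_m satisfy (P'_m·J_m)³ = (−1)^{m−1}·I_m, where P'_m is the matrix with (i,j) entry (−1)^{i−1}·binom(j−1, i−1) and J_m is the anti-diagonal matrix with all anti-diagonal entries equal to 1. -/

import Mathlib

open Matrix

/-- The signed Pascal matrix `P'_m` over `ℤ` (0-indexed entry `(i,j)` is
`(-1)^i * binom(j,i)`). -/
def Pint (m : ℕ) : Matrix (Fin m) (Fin m) ℤ :=
  Matrix.of fun i j => (-1) ^ i.val * (j.val.choose i.val : ℤ)

/-- The anti-diagonal matrix `J_m` over `ℤ`. -/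
def Jint (m : ℕ) : Matrix (Fin m) (Fin m) ℤ :=
  Matrix.of fun i j => if i.val + j.val = m - 1 then 1 else 0

open Polynomial Finset in
lemma identA (n i j : ℕ) (hj : j ≤ n) :
    ∑ k ∈ Finset.range (n+1), (-1:ℤ)^k * (j.choose k) * (k.choose i) =
      (-1)^i * (if i = j then 1 else 0) := by
  rw [← Finset.sum_subset (Finset.range_subset_range.2 (by omega : j+1 ≤ n+1))
      (fun k _ hk => by
        simp only [Finset.mem_range, not_lt] at hk
        rw [Nat.choose_eq_zero_of_lt (by omega)]
        ring)]
  have hp : ((-X : ℤ[X]))^j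
      = ∑ k ∈ Finset.range (j+1), ((-1:ℤ)^k * (j.choose k : ℤ)) • ((X+1)^k : ℤ[X]) := by
    have h := add_pow (-(X+1) : ℤ[X]) 1 j
    have e : (-(X+1) + 1 : ℤ[X]) = -X := by ring
    rw [e] at h
    rw [h]
    refine Finset.sum_congr rfl fun k _ => ?_
    rw [zsmul_eq_mul, neg_pow, one_pow]
    push_cast
    ring
  have hc := congrArg (fun p => Polynomial.coeff p i) hp
  simp only [Polynomial.finset_sum_coeff, Polynomial.coeff_smul, smul_eq_mul,
    Polynomial.coeff_X_add_one_pow] at hc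
  rw [← hc, show ((-X : ℤ[X]))^j = ((-1:ℤ)^j) • (X^j : ℤ[X]) by
    rw [zsmul_eq_mul]; push_cast; rw [neg_pow]]
  rw [Polynomial.coeff_smul, Polynomial.coeff_X_pow, smul_eq_mul]
  by_cases h : i = j <;> simp [h]

open Polynomial Finset in
lemma identB (n i j : ℕ) (hi : i ≤ n) (hj : j ≤ n) :
    ∑ l ∈ Finset.range (n+1), (-1:ℤ)^l * (j.choose l) * ((n-l).choose i) =
      ((n-j).choose (n-i) : ℤ) := by
  rw [← Finset.sum_subset (Finset.range_subset_range.2 (by omega : j+1 ≤ n+1))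
      (fun k _ hk => by
        simp only [Finset.mem_range, not_lt] at hk
        rw [Nat.choose_eq_zero_of_lt (by omega)]
        ring)]
  have hp : ((X+1)^(n-j) * X^j : ℤ[X])
      = ∑ l ∈ Finset.range (j+1), ((-1:ℤ)^l * (j.choose l : ℤ)) • ((X+1)^(n-l) : ℤ[X]) := by
    have h := add_pow (-1 : ℤ[X]) (X+1) j
    have e : ((-1) + (X+1) : ℤ[X]) = X := by ring
    rw [e] at h
    rw [show ((X+1)^(n-j) * X^j : ℤ[X]) = X^j * (X+1)^(n-j) by ring, h, Finset.sum_mul]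
    refine Finset.sum_congr rfl fun l hl => ?_
    simp only [Finset.mem_range] at hl
    rw [zsmul_eq_mul, show n - l = (j - l) + (n - j) by omega, pow_add]
    push_cast
    ring
  have hc := congrArg (fun p => Polynomial.coeff p i) hp
  simp only [Polynomial.finset_sum_coeff, Polynomial.coeff_smul, smul_eq_mul,
    Polynomial.coeff_X_add_one_pow, Polynomial.coeff_mul_X_pow'] at hc
  rw [← hc]
  by_cases h : j ≤ i
  · rw [if_pos h, ← Nat.choose_symm (by omega : i - j ≤ n - j),
      show n - j - (i - j) = n - i by omega]
  · rw [if_neg h, Nat.choose_eq_zero_of_lt (by omega : n - j < n - i), Nat.cast_zero]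

lemma J_mul (m : ℕ) (M : Matrix (Fin m) (Fin m) ℤ) :
    Jint m * M = M.submatrix Fin.rev id := by
  ext i j
  rw [Matrix.mul_apply, Finset.sum_eq_single i.rev]
  · have hi := i.isLt
    simp only [Matrix.submatrix_apply, id, Jint, Matrix.of_apply, Fin.val_rev]
    rw [if_pos (by omega), one_mul]
  · intro k _ hk
    have hi := i.isLt
    have hkk := k.isLt
    simp only [Jint, Matrix.of_apply]
    rw [if_neg, zero_mul]
    intro hc
    exact hk (Fin.ext (by rw [Fin.val_rev]; omega))
  · intro h
    exact absurd (Finset.mem_univ _) h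

lemma mul_J (m : ℕ) (M : Matrix (Fin m) (Fin m) ℤ) :
    M * Jint m = M.submatrix id Fin.rev := by
  ext i j
  rw [Matrix.mul_apply, Finset.sum_eq_single j.rev]
  · have hj := j.isLt
    simp only [Matrix.submatrix_apply, id, Jint, Matrix.of_apply, Fin.val_rev]
    rw [if_pos (by omega), mul_one]
  · intro k _ hk
    have hj := j.isLt
    have hkk := k.isLt
    simp only [Jint, Matrix.of_apply]
    rw [if_neg, mul_zero]
    intro hc
    exact hk (Fin.ext (by rw [Fin.val_rev]; omega))
  · intro h
    exact absurd (Finset.mem_univ _) h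

theorem stmt8 (m : ℕ) (hm : 1 ≤ m) :
    (Pint m * Jint m) ^ 3 = ((-1 : ℤ) ^ (m - 1)) • (1 : Matrix (Fin m) (Fin m) ℤ) := by
  obtain ⟨n, rfl⟩ : ∃ n, m = n + 1 := ⟨m - 1, by omega⟩
  set m := n + 1 with hmdef
  have hJJ : Jint m * Jint m = 1 := by
    rw [J_mul]
    ext i j
    have hi := i.isLt
    have hj := j.isLt
    simp only [Matrix.submatrix_apply, id, Jint, Matrix.of_apply, Matrix.one_apply, Fin.val_rev]
    by_cases h : i = j
    · subst h
      rw [if_pos (by omega), if_pos rfl]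
    · rw [if_neg (fun hc => h (Fin.ext (by omega))), if_neg h]
  have hPP : Pint m * Pint m = 1 := by
    ext i j
    have hi := i.isLt
    have hj := j.isLt
    rw [Matrix.mul_apply]
    simp only [Pint, Matrix.of_apply]
    rw [Fin.sum_univ_eq_sum_range
      (fun k => ((-1:ℤ)^(i:ℕ) * (k.choose (i:ℕ) : ℤ)) * ((-1:ℤ)^k * ((j:ℕ).choose k : ℤ)))]
    have key := identA n i.val j.val (by omega)
    calc ∑ k ∈ Finset.range m,
          ((-1:ℤ)^(i:ℕ) * (k.choose (i:ℕ) : ℤ)) * ((-1:ℤ)^k * ((j:ℕ).choose k : ℤ))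
        = (-1:ℤ)^(i:ℕ) * ∑ k ∈ Finset.range (n+1),
            (-1:ℤ)^k * ((j:ℕ).choose k : ℤ) * ((k.choose (i:ℕ) : ℤ)) := by
          rw [Finset.mul_sum]
          exact Finset.sum_congr rfl fun k _ => by ring
      _ = (-1:ℤ)^(i:ℕ) * ((-1:ℤ)^(i:ℕ) * (if (i:ℕ) = (j:ℕ) then 1 else 0)) := by rw [key]
      _ = (1 : Matrix (Fin m) (Fin m) ℤ) i j := by
          rw [← mul_assoc, ← pow_add, Even.neg_one_pow ⟨(i:ℕ), rfl⟩, one_mul, Matrix.one_apply]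
          simp [Fin.val_inj, eq_comm]
  have hJPJ : Jint m * Pint m * Jint m = (Pint m).submatrix Fin.rev Fin.rev := by
    rw [J_mul, mul_J, Matrix.submatrix_submatrix]
    rfl
  have hPJP : Pint m * Jint m * Pint m = ((-1:ℤ)^n) • (Jint m * Pint m * Jint m) := by
    rw [hJPJ, mul_J]
    ext i j
    have hi := i.isLt
    have hj := j.isLt
    rw [Matrix.mul_apply]
    simp only [Matrix.submatrix_apply, id, Pint, Matrix.of_apply, Matrix.smul_apply,
      smul_eq_mul, Fin.val_rev]
    rw [Fin.sum_univ_eq_sum_range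
      (fun k => ((-1:ℤ)^(i:ℕ) * ((m - (k+1)).choose (i:ℕ) : ℤ)) *
        ((-1:ℤ)^k * ((j:ℕ).choose k : ℤ)))]
    have key := identB n i.val j.val (by omega) (by omega)
    calc ∑ k ∈ Finset.range m,
          ((-1:ℤ)^(i:ℕ) * ((m - (k+1)).choose (i:ℕ) : ℤ)) *
            ((-1:ℤ)^k * ((j:ℕ).choose k : ℤ))
        = (-1:ℤ)^(i:ℕ) * ∑ l ∈ Finset.range (n+1),
            (-1:ℤ)^l * ((j:ℕ).choose l : ℤ) * (((n-l).choose (i:ℕ) : ℤ)) := by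
          rw [Finset.mul_sum]
          refine Finset.sum_congr rfl fun k hk => ?_
          simp only [Finset.mem_range] at hk
          rw [show m - (k+1) = n - k by omega]
          ring
      _ = (-1:ℤ)^(i:ℕ) * ((n-(j:ℕ)).choose (n-(i:ℕ)) : ℤ) := by rw [key]
      _ = (-1:ℤ)^n * ((-1:ℤ)^(m - ((i:ℕ)+1)) * ((m - ((j:ℕ)+1)).choose (m - ((i:ℕ)+1)) : ℤ)) := by
          rw [show m - ((i:ℕ)+1) = n - (i:ℕ) by omega, show m - ((j:ℕ)+1) = n - (j:ℕ) by omega,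
            ← mul_assoc, ← pow_add, show n + (n - (i:ℕ)) = 2*(n-(i:ℕ)) + (i:ℕ) by omega,
            pow_add, pow_mul]
          norm_num
  have h3 : (Pint m * Jint m) ^ 3 = (Pint m * Jint m * Pint m) * (Jint m * Pint m * Jint m) := by
    rw [pow_succ, pow_two]
    simp only [mul_assoc]
  have hsq : (Jint m * Pint m * Jint m) * (Jint m * Pint m * Jint m) = 1 := by
    calc (Jint m * Pint m * Jint m) * (Jint m * Pint m * Jint m)
        = Jint m * (Pint m * ((Jint m * Jint m) * (Pint m * Jint m))) := by
          simp only [mul_assoc]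
      _ = Jint m * (Pint m * (Pint m * Jint m)) := by rw [hJJ, one_mul]
      _ = (Jint m * (Pint m * Pint m)) * Jint m := by simp only [mul_assoc]
      _ = 1 := by rw [hPP, mul_one, hJJ]
  rw [h3, hPJP, smul_mul_assoc, hsq]
  simp
  rw [hmdef, Nat.add_sub_cancel]
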